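/- With p ∈ [0,1] and d ∈ ℕ: (i) E[Φ_Even] = E[Φ_Odd] = (1/2)(2−p)^d; (ii) Var(Φ_Even) = Var(Φ_Odd) = 2^{d−1}·((1 − 3p/4)^d − (1 − p/2)^{2d}), and for fixed p ∈ (0,1), Var(Φ_Even) / ((1/2)((4−3p)/2)^d) → 1 as d → ∞; (iii) Cov(Φ_Even, Φ_Odd) = d·((2−p)²/2)^{d−1}·p(1−p)/4, and for fixed p ∈ (0,1) the ratio Cov(Φ_Even, Φ_Odd)/Var(Φ_Even) decays exponentially in d. -/

import Mathlib

open MeasureTheory ProbabilityTheory Filter Finset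

noncomputable section

namespace PercolatedHypercube

abbrev Vertex (d : ℕ) := Fin d → Bool

abbrev Config (d : ℕ) := Sym2 (Vertex d) → Bool

/-- Bernoulli(p) measure on `Bool`. -/
def edgeMeasure (p : ℝ) : Measure Bool :=
  (PMF.bernoulli (min (Real.toNNReal p) 1) (min_le_right _ _)).toMeasure

instance (p : ℝ) : IsProbabilityMeasure (edgeMeasure p) := by
  unfold edgeMeasure; infer_instance

/-- Bond percolation on the hypercube: every (potential) edge open independently w.p. `p`. -/
def percMeasure (d : ℕ) (p : ℝ) : Measure (Config d) :=
  Measure.pi fun _ => edgeMeasure p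

instance (d : ℕ) (p : ℝ) : IsProbabilityMeasure (percMeasure d p) := by
  unfold percMeasure; infer_instance

/-- Adjacency in the hypercube `Q_d`: differ in exactly one coordinate. -/
def adj {d : ℕ} (u v : Vertex d) : Prop :=
  (univ.filter fun i => u i ≠ v i).card = 1

instance {d : ℕ} (u v : Vertex d) : Decidable (adj u v) := by
  unfold adj; infer_instance

/-- The edge between `u` and `v` is an edge of `Q_d` and is retained in `ω`. -/
def openEdge {d : ℕ} (ω : Config d) (u v : Vertex d) : Prop :=
  adj u v ∧ ω s(u, v) = true

instance {d : ℕ} (ω : Config d) (u v : Vertex d) : Decidable (openEdge ω u v) := by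
  unfold openEdge; infer_instance

/-- `N_p(v)`: number of neighbors of `v` in the percolated hypercube. -/
def Np {d : ℕ} (ω : Config d) (v : Vertex d) : ℕ :=
  (univ.filter fun u => openEdge ω u v).card

/-- `N_p(S)` as a set: vertices adjacent in the percolated hypercube to some vertex of `S`. -/
def NpSet {d : ℕ} (ω : Config d) (S : Finset (Vertex d)) : Finset (Vertex d) :=
  univ.filter fun u => ∃ v ∈ S, openEdge ω v u

/-- Independent set of the percolated hypercube: contains no retained edge. -/
def IndepSet {d : ℕ} (ω : Config d) (I : Finset (Vertex d)) : Prop :=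
  ∀ u ∈ I, ∀ v ∈ I, ¬ openEdge ω u v

instance {d : ℕ} (ω : Config d) (I : Finset (Vertex d)) : Decidable (IndepSet ω I) := by
  unfold IndepSet; infer_instance

/-- `Z_{d,p}`: the number of independent sets of the percolated hypercube. -/
def Z (d : ℕ) (ω : Config d) : ℕ :=
  (univ.filter fun I : Finset (Vertex d) => IndepSet ω I).card

def hammingWeight {d : ℕ} (v : Vertex d) : ℕ := (univ.filter fun i => v i = true).card

/-- The even side of the hypercube. -/
def EvenV (d : ℕ) : Finset (Vertex d) := univ.filter fun v => Even (hammingWeight v)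

/-- The odd side of the hypercube. -/
def OddV (d : ℕ) : Finset (Vertex d) := univ.filter fun v => ¬ Even (hammingWeight v)

/-- `φ_v = 2^{-N_p(v)}`. -/
def phi {d : ℕ} (ω : Config d) (v : Vertex d) : ℝ := (2 : ℝ)⁻¹ ^ (Np ω v)

def PhiEven (d : ℕ) (ω : Config d) : ℝ := ∑ v ∈ EvenV d, phi ω v

def PhiOdd (d : ℕ) (ω : Config d) : ℝ := ∑ v ∈ OddV d, phi ω v

/-- `μ_p = (1/2)(2-p)^d`. -/
def muP (d : ℕ) (p : ℝ) : ℝ := (1 / 2) * (2 - p) ^ d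

/-- `σ_p = ((1/2)((4-3p)/2)^d)^{1/2}`. -/
def sigmaP (d : ℕ) (p : ℝ) : ℝ := Real.sqrt ((1 / 2) * ((4 - 3 * p) / 2) ^ d)

/-- The law of a real random variable under the percolation measure. -/
def law (d : ℕ) (p : ℝ) (X : Config d → ℝ) : ProbabilityMeasure ℝ :=
  ⟨(percMeasure d p).map X,
    Measure.isProbabilityMeasure_map (measurable_of_countable X).aemeasurable⟩

/-- The standard Gaussian as a probability measure on `ℝ`. -/
def stdGaussian : ProbabilityMeasure ℝ := ⟨gaussianReal 0 1, inferInstance⟩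


/-- Law of an `ℝ × ℝ`-valued random variable under the percolation measure. -/
def law2 (d : ℕ) (p : ℝ) (X : Config d → ℝ × ℝ) : ProbabilityMeasure (ℝ × ℝ) :=
  ⟨(percMeasure d p).map X,
    Measure.isProbabilityMeasure_map (measurable_of_countable X).aemeasurable⟩

/-- Two independent standard Gaussians. -/
def stdGaussian2 : ProbabilityMeasure (ℝ × ℝ) :=
  ⟨(gaussianReal 0 1).prod (gaussianReal 0 1), inferInstance⟩

/-- Law of `(e^{-1/4}/2^{3/2}) (e^{W₁/√2} + e^{W₂/√2})` for `W₁, W₂` i.i.d. standard Gaussians. -/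
def logNormalLimit : ProbabilityMeasure ℝ :=
  ⟨((gaussianReal 0 1).prod (gaussianReal 0 1)).map (fun w =>
      (Real.exp (-(1 / 4)) / (2 : ℝ) ^ ((3 : ℝ) / 2)) *
        (Real.exp (w.1 / Real.sqrt 2) + Real.exp (w.2 / Real.sqrt 2))),
    Measure.isProbabilityMeasure_map (Measurable.aemeasurable (by fun_prop))⟩

/-- Hard-core partition function `Z_{d,p,λ}`. -/
def Zlam (d : ℕ) (lam : ℝ) (ω : Config d) : ℝ :=
  ∑ I : Finset (Vertex d), if IndepSet ω I then lam ^ I.card else 0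

/-- `μ_{p,λ}`. -/
def muPL (d : ℕ) (p lam : ℝ) : ℝ := (lam / 2) * (2 - 2 * lam * p / (1 + lam)) ^ d

/-- `σ_{p,λ}`. -/
def sigmaPL (d : ℕ) (p lam : ℝ) : ℝ :=
  Real.sqrt ((lam ^ 2 / 2) * (2 * (1 - p + p / (1 + lam) ^ 2)) ^ d)

/-- Law of `(e^{-λ²/4}/2^{3/2}) (e^{λW₁/√2} + e^{λW₂/√2})`. -/
def logNormalLimitLam (lam : ℝ) : ProbabilityMeasure ℝ :=
  ⟨((gaussianReal 0 1).prod (gaussianReal 0 1)).map (fun w =>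
      (Real.exp (-(lam ^ 2 / 4)) / (2 : ℝ) ^ ((3 : ℝ) / 2)) *
        (Real.exp (lam * w.1 / Real.sqrt 2) + Real.exp (lam * w.2 / Real.sqrt 2))),
    Measure.isProbabilityMeasure_map (Measurable.aemeasurable (by fun_prop))⟩

/-- Law of `e^{W₁/√2} + e^{W₂/√2}` for independent standard Gaussians. -/
def expSumGaussians : ProbabilityMeasure ℝ :=
  ⟨((gaussianReal 0 1).prod (gaussianReal 0 1)).map (fun w =>
      Real.exp (w.1 / Real.sqrt 2) + Real.exp (w.2 / Real.sqrt 2)),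
    Measure.isProbabilityMeasure_map (Measurable.aemeasurable (by fun_prop))⟩

/-- Law of `e^{λW₁/√2} + e^{λW₂/√2}` for independent standard Gaussians. -/
def expSumGaussiansLam (lam : ℝ) : ProbabilityMeasure ℝ :=
  ⟨((gaussianReal 0 1).prod (gaussianReal 0 1)).map (fun w =>
      Real.exp (lam * w.1 / Real.sqrt 2) + Real.exp (lam * w.2 / Real.sqrt 2)),
    Measure.isProbabilityMeasure_map (Measurable.aemeasurable (by fun_prop))⟩

/-- Poisson(μ) probability mass function. -/
def poissonPdf (μ : ℝ) (n : ℕ) : ℝ := Real.exp (-μ) * μ ^ n / n.factorial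

/-- Total-variation distance between two (mass functions of) distributions on `ℕ`. -/
def tvN (P Q : ℕ → ℝ) : ℝ := (1 / 2) * ∑' n, |P n - Q n|

/-- Total-variation distance between distributions on subsets of the hypercube. -/
def tvF (d : ℕ) (P Q : Finset (Vertex d) → ℝ) : ℝ :=
  (1 / 2) * ∑ S : Finset (Vertex d), |P S - Q S|

/-- Mass function of `min(|S ∩ Even|, |S ∩ Odd|)` for `S` uniform on independent sets. -/
def defectPMF (d : ℕ) (ω : Config d) (n : ℕ) : ℝ :=
  ((univ.filter fun I : Finset (Vertex d) =>
      IndepSet ω I ∧ min (I ∩ EvenV d).card (I ∩ OddV d).card = n).card : ℝ) / Z d ω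

/-- Mass function of the uniform distribution on independent sets. -/
def uniformPMF (d : ℕ) (ω : Config d) (S : Finset (Vertex d)) : ℝ :=
  (if IndepSet ω S then 1 else 0) / Z d ω

open scoped Classical in
/-- Mass function of the output of the approximate sampler, conditionally on the chosen side `H`:
steps (2)-(4) of the sampling procedure. -/
def approxCond (d : ℕ) (ω : Config d) (H S : Finset (Vertex d)) : ℝ :=
  if Disjoint (S \ H) (NpSet ω (S ∩ H)) then
    (∏ v ∈ S ∩ H, phi ω v / (1 + phi ω v)) *
      (∏ v ∈ H \ S, 1 / (1 + phi ω v)) *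
      (2 : ℝ)⁻¹ ^ (Hᶜ \ NpSet ω (S ∩ H)).card
  else 0

/-- Mass function of the output of the approximate sampler with `H` uniform on {Even, Odd}. -/
def approxPMFHalf (d : ℕ) (ω : Config d) (S : Finset (Vertex d)) : ℝ :=
  (1 / 2) * approxCond d ω (EvenV d) S + (1 / 2) * approxCond d ω (OddV d) S

def wEven (d : ℕ) (ω : Config d) : ℝ :=
  Real.exp (PhiEven d ω) / (Real.exp (PhiEven d ω) + Real.exp (PhiOdd d ω))

def wOdd (d : ℕ) (ω : Config d) : ℝ :=
  Real.exp (PhiOdd d ω) / (Real.exp (PhiEven d ω) + Real.exp (PhiOdd d ω))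

/-- Mass function of the output of the approximate sampler with `Φ`-biased side choice. -/
def approxPMF (d : ℕ) (ω : Config d) (S : Finset (Vertex d)) : ℝ :=
  wEven d ω * approxCond d ω (EvenV d) S + wOdd d ω * approxCond d ω (OddV d) S

/-- Mass function of `|S₁|`, conditionally on the chosen side `H`. -/
def s1SidePMF (d : ℕ) (ω : Config d) (H : Finset (Vertex d)) (n : ℕ) : ℝ :=
  ∑ T : Finset (Vertex d), if T ⊆ H ∧ T.card = n then
    (∏ v ∈ T, phi ω v / (1 + phi ω v)) * ∏ v ∈ H \ T, 1 / (1 + phi ω v)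
  else 0

/-- Mass function of `|S₁|` under the approximate sampler with `Φ`-biased side choice. -/
def s1PMF (d : ℕ) (ω : Config d) (n : ℕ) : ℝ :=
  wEven d ω * s1SidePMF d ω (EvenV d) n + wOdd d ω * s1SidePMF d ω (OddV d) n

/-- `u` and `v` are 2-neighbors: at Hamming distance exactly 2. -/
def twoNbr {d : ℕ} (u v : Vertex d) : Prop :=
  (univ.filter fun i => u i ≠ v i).card = 2

instance {d : ℕ} (u v : Vertex d) : Decidable (twoNbr u v) := by
  unfold twoNbr; infer_instance

/-- `Good^Even`: subsets of the even side of size at most `2^d/d²` with no two 2-neighbors. -/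
def GoodEven (d : ℕ) (S : Finset (Vertex d)) : Prop :=
  S ⊆ EvenV d ∧ ((S.card : ℝ) ≤ 2 ^ d / d ^ 2) ∧
    ∀ u ∈ S, ∀ v ∈ S, u ≠ v → ¬ twoNbr u v

/-- `Good^Odd`. -/
def GoodOdd (d : ℕ) (S : Finset (Vertex d)) : Prop :=
  S ⊆ OddV d ∧ ((S.card : ℝ) ≤ 2 ^ d / d ^ 2) ∧
    ∀ u ∈ S, ∀ v ∈ S, u ≠ v → ¬ twoNbr u v

open scoped Classical in
/-- `Σ_{S ∈ Good^Even} 2^{-N_p(S)}`. -/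
def goodSumEven (d : ℕ) (ω : Config d) : ℝ :=
  ∑ S : Finset (Vertex d), if GoodEven d S then (2 : ℝ)⁻¹ ^ (NpSet ω S).card else 0

open scoped Classical in
/-- `Σ_{S ∈ Good^Odd} 2^{-N_p(S)}`. -/
def goodSumOdd (d : ℕ) (ω : Config d) : ℝ :=
  ∑ S : Finset (Vertex d), if GoodOdd d S then (2 : ℝ)⁻¹ ^ (NpSet ω S).card else 0

open scoped Classical in
/-- `Σ_{S ∈ Good^Even, |S| = m} 2^{-N_p(S)}`. -/
def goodSumEvenM (d : ℕ) (ω : Config d) (m : ℕ) : ℝ :=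
  ∑ S : Finset (Vertex d),
    if GoodEven d S ∧ S.card = m then (2 : ℝ)⁻¹ ^ (NpSet ω S).card else 0

/-- `ζ_p`. -/
def zeta (p : ℝ) : ℝ := if p = 2 / 3 then Real.exp (-(1 / 4)) else 1

/-- The window of relevant sizes: `{m : |m - μ_p| ≤ μ_p^{0.6}}`. -/
def Window (d : ℕ) (p : ℝ) : Set ℕ :=
  {m | |(m : ℝ) - muP d p| ≤ muP d p ^ (0.6 : ℝ)}

open scoped Classical in
/-- Mass function at `v` of the random measure `π` on the even side, `π(v) ∝ φ_v`. -/
def piPMF (d : ℕ) (ω : Config d) (v : Vertex d) : ℝ :=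
  if v ∈ EvenV d then phi ω v / PhiEven d ω else 0

/-- Number of colliding pairs among the sample `x`. -/
def nCollide {d : ℕ} (n : ℕ) (x : Fin n → Vertex d) : ℕ :=
  (univ.filter fun ij : Fin n × Fin n =>
    ij.1 < ij.2 ∧ (x ij.1 = x ij.2 ∨ twoNbr (x ij.1) (x ij.2))).card

/-- Mass function of the law `L_{n,d}` of the number of collisions among `n` i.i.d. samples
from `π`. -/
def collideLaw (d : ℕ) (ω : Config d) (n k : ℕ) : ℝ :=
  ∑ x : Fin n → Vertex d, if nCollide n x = k then ∏ i, piPMF d ω (x i) else 0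

open scoped Classical in
/-- `π(Collide_n)`: probability that some two of the `n` i.i.d. samples from `π` collide. -/
def collideProb (d : ℕ) (ω : Config d) (n : ℕ) : ℝ :=
  ∑ x : Fin n → Vertex d,
    if (∃ i j : Fin n, i < j ∧ (x i = x j ∨ twoNbr (x i) (x j)))
    then ∏ i, piPMF d ω (x i) else 0

/-- `Bad^Even`: subsets of the even side of size at most `2^d/d²` containing two distinct
2-neighbors. -/
def BadEven (d : ℕ) (S : Finset (Vertex d)) : Prop :=
  S ⊆ EvenV d ∧ ((S.card : ℝ) ≤ 2 ^ d / d ^ 2) ∧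
    ∃ u ∈ S, ∃ v ∈ S, u ≠ v ∧ twoNbr u v

open scoped Classical in
/-- `Σ_{S ∈ Bad^Even} 2^{-N_p(S)}`. -/
def badSumEven (d : ℕ) (ω : Config d) : ℝ :=
  ∑ S : Finset (Vertex d), if BadEven d S then (2 : ℝ)⁻¹ ^ (NpSet ω S).card else 0

/-- Hard-core `φ_{v,λ} = λ(1+λ)^{-N_p(v)}`. -/
def phiL {d : ℕ} (lam : ℝ) (ω : Config d) (v : Vertex d) : ℝ :=
  lam * (1 + lam)⁻¹ ^ (Np ω v)

def PhiEvenL (d : ℕ) (lam : ℝ) (ω : Config d) : ℝ := ∑ v ∈ EvenV d, phiL lam ω v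

def PhiOddL (d : ℕ) (lam : ℝ) (ω : Config d) : ℝ := ∑ v ∈ OddV d, phiL lam ω v

variable {d : ℕ}

def flip (v : Vertex d) (i : Fin d) : Vertex d := Function.update v i (!(v i))

lemma flip_apply_same (v : Vertex d) (i : Fin d) : flip v i i = !(v i) :=
  Function.update_self _ _ _

lemma flip_apply_ne (v : Vertex d) {i j : Fin d} (h : j ≠ i) : flip v i j = v j :=
  Function.update_of_ne h _ _

lemma adj_iff_flip {u v : Vertex d} : adj u v ↔ ∃ i, u = flip v i := by
  constructor
  · intro h
    obtain ⟨i, hi⟩ := Finset.card_eq_one.mp h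
    refine ⟨i, funext fun j => ?_⟩
    by_cases hj : j = i
    · subst hj
      have : j ∈ univ.filter fun i => u i ≠ v i := hi ▸ Finset.mem_singleton_self _
      have := (Finset.mem_filter.mp this).2
      rw [flip_apply_same]
      revert this; cases u j <;> cases v j <;> simp
    · have : j ∉ univ.filter fun i => u i ≠ v i := by
        rw [hi]; simpa using hj
      have huv : u j = v j := by
        by_contra hne; exact this (Finset.mem_filter.mpr ⟨Finset.mem_univ _, hne⟩)
      rw [flip_apply_ne _ hj, huv]
  · rintro ⟨i, rfl⟩
    have : (univ.filter fun j => flip v i j ≠ v j) = {i} := by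
      ext j
      simp only [Finset.mem_filter, Finset.mem_univ, true_and, Finset.mem_singleton]
      constructor
      · intro h
        by_contra hj
        exact h (flip_apply_ne _ hj)
      · rintro rfl
        rw [flip_apply_same]; cases v j <;> simp
    unfold adj; rw [this, Finset.card_singleton]

lemma adj_comm {u v : Vertex d} : adj u v ↔ adj v u := by
  unfold adj
  congr! 2
  ext i
  simp [ne_comm]

lemma adj_irrefl (v : Vertex d) : ¬ adj v v := by
  unfold adj; simp

lemma flip_injective (v : Vertex d) : Function.Injective (flip v) := by
  intro i j h
  by_contra hij
  have h1 := congrFun h i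
  rw [flip_apply_same] at h1
  rw [flip_apply_ne _ hij] at h1
  cases v i <;> simp_all

lemma neighbors_eq (v : Vertex d) :
    (univ.filter fun u => adj u v) = (univ : Finset (Fin d)).image (flip v) := by
  ext u
  simp [adj_iff_flip, eq_comm]

lemma neighbors_card (v : Vertex d) : (univ.filter fun u => adj u v).card = d := by
  rw [neighbors_eq, Finset.card_image_of_injective _ (flip_injective v)]
  simp

lemma adj_ne {u v : Vertex d} (h : adj u v) : u ≠ v := by
  rintro rfl; exact adj_irrefl _ h

lemma hammingWeight_flip (v : Vertex d) (i : Fin d) :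
    hammingWeight (flip v i) + 1 = hammingWeight v ∨
    hammingWeight v + 1 = hammingWeight (flip v i) := by
  unfold hammingWeight
  by_cases hv : v i = true
  · left
    have h1 : (univ.filter fun j => flip v i j = true) = (univ.filter fun j => v j = true).erase i := by
      ext j
      by_cases hj : j = i
      · subst hj; simp [flip_apply_same, hv]
      · simp [flip_apply_ne _ hj, hj]
    rw [h1, Finset.card_erase_add_one (by simp [hv])]
  · right
    have h1 : (univ.filter fun j => flip v i j = true) = insert i (univ.filter fun j => v j = true) := by
      ext j
      by_cases hj : j = i
      · subst hj; simp [flip_apply_same, Bool.eq_false_iff.mpr hv]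
      · simp [flip_apply_ne _ hj, hj]
    rw [h1, Finset.card_insert_of_notMem (by simp; exact Bool.eq_false_iff.mpr hv)]

lemma adj_parity {u v : Vertex d} (h : adj u v) :
    Even (hammingWeight u) ↔ ¬ Even (hammingWeight v) := by
  obtain ⟨i, rfl⟩ := adj_iff_flip.mp h
  rcases hammingWeight_flip v i with h1 | h1
  · rw [← h1, Nat.even_add_one]; tauto
  · rw [← h1, Nat.even_add_one]

lemma flip_flip (v : Vertex d) (i : Fin d) : flip (flip v i) i = v := by
  funext j
  by_cases hj : j = i
  · subst hj; rw [flip_apply_same, flip_apply_same, Bool.not_not]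
  · rw [flip_apply_ne _ hj, flip_apply_ne _ hj]




/-- Edges of `Q_d` incident to `v`. -/
def inc (v : Vertex d) : Finset (Sym2 (Vertex d)) :=
  (univ.filter fun u => adj u v).image (fun u => s(u, v))

lemma mem_inc {v : Vertex d} {e : Sym2 (Vertex d)} :
    e ∈ inc v ↔ ∃ u, adj u v ∧ e = s(u, v) := by
  simp [inc, eq_comm]

lemma card_inc (v : Vertex d) : (inc v).card = d := by
  rw [inc, Finset.card_image_of_injOn, neighbors_card]
  intro a ha b hb hab
  simp only [Finset.coe_filter, Set.mem_setOf_eq] at ha hb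
  rcases Sym2.eq_iff.mp hab with ⟨h1, _⟩ | ⟨h1, h2⟩
  · exact h1
  · exact absurd h1 (adj_ne ha.2)

lemma Np_eq_edges (ω : Config d) (v : Vertex d) :
    Np ω v = ((inc v).filter fun e => ω e = true).card := by
  unfold Np
  apply Finset.card_bij (fun u _ => s(u, v))
  · intro a ha
    simp only [Finset.mem_filter, Finset.mem_univ, true_and] at ha ⊢
    exact ⟨mem_inc.mpr ⟨a, ha.1, rfl⟩, ha.2⟩
  · intro a ha b hb hab
    simp only [Finset.mem_filter, Finset.mem_univ, true_and] at ha hb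
    rcases Sym2.eq_iff.mp hab with ⟨h1, _⟩ | ⟨h1, h2⟩
    · exact h1
    · exact absurd h1 (adj_ne ha.1)
  · intro e he
    simp only [Finset.mem_filter, Finset.mem_univ, true_and] at he
    obtain ⟨u, hu, rfl⟩ := mem_inc.mp he.1
    exact ⟨u, Finset.mem_filter.mpr ⟨Finset.mem_univ _, hu, he.2⟩, rfl⟩

lemma phi_prod (ω : Config d) (v : Vertex d) :
    phi ω v = ∏ e ∈ inc v, (if ω e = true then (2 : ℝ)⁻¹ else 1) := by
  rw [Finset.prod_ite, Finset.prod_const, Finset.prod_const, one_pow, mul_one,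
    phi, Np_eq_edges]

lemma inc_inter_self (v : Vertex d) : inc v ∩ inc v = inc v := Finset.inter_self _

lemma inc_inter_adj {u v : Vertex d} (h : adj u v) : inc u ∩ inc v = {s(u, v)} := by
  ext e
  simp only [Finset.mem_inter, Finset.mem_singleton]
  constructor
  · rintro ⟨h1, h2⟩
    obtain ⟨a, ha, rfl⟩ := mem_inc.mp h1
    obtain ⟨b, hb, he⟩ := mem_inc.mp h2
    rcases Sym2.eq_iff.mp he with ⟨h3, h4⟩ | ⟨h3, h4⟩
    · exact absurd h4 (adj_ne h)
    · subst h3; subst h4; exact Sym2.eq_swap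
  · rintro rfl
    constructor
    · exact mem_inc.mpr ⟨v, adj_comm.mp h, Sym2.eq_swap.symm⟩
    · exact mem_inc.mpr ⟨u, h, by rw [Sym2.eq_swap]⟩

lemma inc_inter_nonadj {u v : Vertex d} (hne : u ≠ v) (h : ¬ adj u v) :
    inc u ∩ inc v = ∅ := by
  ext e
  simp only [Finset.mem_inter, Finset.notMem_empty, iff_false, not_and]
  intro h1 h2
  obtain ⟨a, ha, rfl⟩ := mem_inc.mp h1
  obtain ⟨b, hb, he⟩ := mem_inc.mp h2
  rcases Sym2.eq_iff.mp he with ⟨h3, h4⟩ | ⟨h3, h4⟩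
  · exact hne h4
  · subst h3; exact h (by rw [h4]; exact hb)

lemma card_sdiff_inc (u v : Vertex d) :
    (inc u \ inc v).card = d - (inc u ∩ inc v).card := by
  have := Finset.card_sdiff_add_card_inter (inc u) (inc v)
  have h2 := card_inc u
  omega
  
lemma mem_EvenV {v : Vertex d} : v ∈ EvenV d ↔ Even (hammingWeight v) := by
  simp [EvenV]

lemma mem_OddV {v : Vertex d} : v ∈ OddV d ↔ ¬ Even (hammingWeight v) := by
  simp [OddV]

lemma card_evenV_eq_oddV (hd : 1 ≤ d) : (EvenV d).card = (OddV d).card := by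
  have hi : (0 : ℕ) < d := hd
  apply Finset.card_bij' (fun v _ => flip v ⟨0, hi⟩) (fun v _ => flip v ⟨0, hi⟩)
  · intro a ha
    have hadj : adj (flip a ⟨0, hi⟩) a := adj_iff_flip.mpr ⟨_, rfl⟩
    rw [mem_OddV, adj_parity hadj]
    exact not_not_intro (mem_EvenV.mp ha)
  · intro a ha
    have hadj : adj (flip a ⟨0, hi⟩) a := adj_iff_flip.mpr ⟨_, rfl⟩
    rw [mem_EvenV, adj_parity hadj]
    exact mem_OddV.mp ha
  · intro a _; exact flip_flip a _
  · intro a _; exact flip_flip a _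

lemma card_even_add_odd : (EvenV d).card + (OddV d).card = 2 ^ d := by
  rw [EvenV, OddV, Finset.card_filter_add_card_filter_not, Finset.card_univ]
  rw [show Fintype.card (Vertex d) = 2 ^ d by simp [Fintype.card_fun]]

lemma card_evenV (hd : 1 ≤ d) : (EvenV d).card = 2 ^ (d - 1) := by
  have h1 := card_evenV_eq_oddV hd
  have h2 := card_even_add_odd (d := d)
  obtain ⟨k, rfl⟩ := Nat.exists_eq_add_of_le hd
  rw [show 1 + k - 1 = k by omega]
  have : 2 ^ (1 + k) = 2 * 2 ^ k := by rw [pow_add, pow_one]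
  omega

lemma card_oddV (hd : 1 ≤ d) : (OddV d).card = 2 ^ (d - 1) := by
  rw [← card_evenV_eq_oddV hd, card_evenV hd]

lemma even_odd_ne {u v : Vertex d} (hu : u ∈ EvenV d) (hv : v ∈ OddV d) : u ≠ v := by
  rintro rfl; exact mem_OddV.mp hv (mem_EvenV.mp hu)

lemma even_even_not_adj {u v : Vertex d} (hu : u ∈ EvenV d) (hv : v ∈ EvenV d) :
    ¬ adj u v := fun h => (adj_parity h).mp (mem_EvenV.mp hu) (mem_EvenV.mp hv)

lemma odd_neighbors (u : Vertex d) (hu : u ∈ EvenV d) :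
    ((OddV d).filter fun v => adj u v) = univ.filter fun v => adj u v := by
  ext v
  simp only [Finset.mem_filter, Finset.mem_univ, true_and, mem_OddV]
  constructor
  · exact fun h => h.2
  · intro h
    exact ⟨fun hv => (adj_parity (adj_comm.mp h)).mp hv (mem_EvenV.mp hu), h⟩

lemma card_odd_neighbors (u : Vertex d) (hu : u ∈ EvenV d) :
    ((OddV d).filter fun v => adj u v).card = d := by
  rw [odd_neighbors u hu]
  have : (univ.filter fun v => adj u v) = (univ.filter fun v => adj v u) := by
    ext v; simp [adj_comm (u := u) (v := v)]
  rw [this, neighbors_card]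


lemma edge_integral {p : ℝ} (hp0 : 0 ≤ p) (hp1 : p ≤ 1) (g : Bool → ℝ) :
    ∫ b, g b ∂(edgeMeasure p) = (1 - p) * g false + p * g true := by
  rw [integral_fintype (Integrable.of_finite)]
  have ht : (edgeMeasure p) {true} = ENNReal.ofReal p := by
    rw [edgeMeasure, PMF.toMeasure_apply_singleton _ _ (measurableSet_singleton _)]
    simp [PMF.bernoulli, min_eq_left (Real.toNNReal_le_one.2 hp1)]
    rfl
  have hf : (edgeMeasure p) {false} = 1 - ENNReal.ofReal p := by
    rw [edgeMeasure, PMF.toMeasure_apply_singleton _ _ (measurableSet_singleton _)]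
    simp [PMF.bernoulli, min_eq_left (Real.toNNReal_le_one.2 hp1)]
    rfl
  have h2 : ((1 : ENNReal) - ENNReal.ofReal p).toReal = 1 - p := by
    rw [ENNReal.toReal_sub_of_le (ENNReal.ofReal_le_one.2 hp1) ENNReal.one_ne_top]
    simp [ENNReal.toReal_ofReal hp0]
  simp [Fintype.sum_bool, Measure.real, ht, hf, ENNReal.toReal_ofReal hp0, h2]
  ring

lemma perc_integral_prod (d : ℕ) (p : ℝ) (F : Sym2 (Vertex d) → Bool → ℝ) :
    ∫ ω, ∏ e, F e (ω e) ∂(percMeasure d p) = ∏ e, ∫ b, F e b ∂(edgeMeasure p) := by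
  letI : MeasureSpace Bool := ⟨edgeMeasure p⟩
  haveI : IsProbabilityMeasure (volume : Measure Bool) :=
    (inferInstance : IsProbabilityMeasure (edgeMeasure p))
  have h : percMeasure d p = (volume : Measure (Config d)) := rfl
  rw [h]
  exact integral_fintype_prod_eq_prod F

lemma pair_integral {p : ℝ} (hp0 : 0 ≤ p) (hp1 : p ≤ 1) (d : ℕ)
    (A B : Finset (Sym2 (Vertex d))) :
    ∫ ω, (∏ e ∈ A, if ω e = true then (2 : ℝ)⁻¹ else 1) *
          (∏ e ∈ B, if ω e = true then (2 : ℝ)⁻¹ else 1) ∂(percMeasure d p)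
      = (1 - 3 * p / 4) ^ (A ∩ B).card *
          (1 - p / 2) ^ ((A \ B).card + (B \ A).card) := by
  have hsplit : ∀ (S : Finset (Sym2 (Vertex d))) (ω : Config d),
      (∏ e ∈ S, if ω e = true then (2 : ℝ)⁻¹ else 1)
        = ∏ e : Sym2 (Vertex d), (if e ∈ S then (if ω e = true then (2 : ℝ)⁻¹ else 1) else 1) := by
    intro S ω
    rw [← Finset.prod_subset (Finset.subset_univ S) (fun x _ hx => if_neg hx)]
    exact Finset.prod_congr rfl fun x hx => (if_pos hx).symm
  have hint : ∀ ω : Config d,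
      (∏ e ∈ A, if ω e = true then (2 : ℝ)⁻¹ else 1) *
        (∏ e ∈ B, if ω e = true then (2 : ℝ)⁻¹ else 1)
      = ∏ e : Sym2 (Vertex d),
          ((if e ∈ A then (if ω e = true then (2 : ℝ)⁻¹ else 1) else 1) *
           (if e ∈ B then (if ω e = true then (2 : ℝ)⁻¹ else 1) else 1)) := by
    intro ω
    rw [hsplit A ω, hsplit B ω, Finset.prod_mul_distrib]
  simp_rw [hint]
  rw [perc_integral_prod d p (fun e b =>
    (if e ∈ A then (if b = true then (2 : ℝ)⁻¹ else 1) else 1) *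
    (if e ∈ B then (if b = true then (2 : ℝ)⁻¹ else 1) else 1))]
  have hedge : ∀ e : Sym2 (Vertex d),
      (∫ b, ((if e ∈ A then (if b = true then (2 : ℝ)⁻¹ else 1) else 1) *
             (if e ∈ B then (if b = true then (2 : ℝ)⁻¹ else 1) else 1)) ∂(edgeMeasure p))
      = (if e ∈ A ∩ B then 1 - 3 * p / 4 else if e ∈ A ∪ B then 1 - p / 2 else 1) := by
    intro e
    rw [edge_integral hp0 hp1]
    by_cases hA : e ∈ A <;> by_cases hB : e ∈ B <;>
      simp [hA, hB] <;> ring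
  rw [Finset.prod_congr rfl fun e _ => hedge e]
  rw [← Finset.prod_subset (Finset.subset_univ (A ∪ B))
    (fun x _ hx => by rw [if_neg, if_neg hx]; exact fun hc => hx (Finset.mem_union.mpr (Or.inl (Finset.mem_inter.mp hc).1)))]
  have hd1 : Disjoint (A \ B) B := Finset.sdiff_disjoint
  have hd2 : Disjoint (B \ A) (A ∩ B) :=
    Finset.sdiff_disjoint.mono_right Finset.inter_subset_left
  have e1 : ∀ f : Sym2 (Vertex d) → ℝ, ∏ e ∈ A ∪ B, f e = (∏ e ∈ A \ B, f e) * ∏ e ∈ B, f e := by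
    intro f
    rw [← Finset.prod_union hd1, Finset.sdiff_union_self_eq_union]
  have e2 : ∀ f : Sym2 (Vertex d) → ℝ, ∏ e ∈ B, f e = (∏ e ∈ B \ A, f e) * ∏ e ∈ A ∩ B, f e := by
    intro f
    rw [← Finset.prod_union hd2, show B \ A ∪ A ∩ B = B from by
      rw [Finset.inter_comm, Finset.sdiff_union_inter]]
  rw [e1, e2]
  have h1 : ∀ e ∈ A \ B, (if e ∈ A ∩ B then 1 - 3*p/4 else if e ∈ A ∪ B then 1 - p/2 else (1:ℝ)) = 1 - p/2 := by
    intro e he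
    have := Finset.mem_sdiff.mp he
    rw [if_neg (fun hc => this.2 (Finset.mem_inter.mp hc).2), if_pos (Finset.mem_union.mpr (Or.inl this.1))]
  have h2 : ∀ e ∈ B \ A, (if e ∈ A ∩ B then 1 - 3*p/4 else if e ∈ A ∪ B then 1 - p/2 else (1:ℝ)) = 1 - p/2 := by
    intro e he
    have := Finset.mem_sdiff.mp he
    rw [if_neg (fun hc => this.2 (Finset.mem_inter.mp hc).1), if_pos (Finset.mem_union.mpr (Or.inr this.1))]
  have h3 : ∀ e ∈ A ∩ B, (if e ∈ A ∩ B then 1 - 3*p/4 else if e ∈ A ∪ B then 1 - p/2 else (1:ℝ)) = 1 - 3*p/4 := by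
    intro e he; rw [if_pos he]
  rw [Finset.prod_congr rfl h1, Finset.prod_congr rfl h2, Finset.prod_congr rfl h3,
    Finset.prod_const, Finset.prod_const, Finset.prod_const, pow_add]
  ring


variable {p : ℝ}

lemma integral_phi_mul (hp0 : 0 ≤ p) (hp1 : p ≤ 1) (u v : Vertex d) :
    ∫ ω, phi ω u * phi ω v ∂(percMeasure d p)
      = (1 - 3 * p / 4) ^ (inc u ∩ inc v).card *
          (1 - p / 2) ^ ((inc u \ inc v).card + (inc v \ inc u).card) := by
  simp only [phi_prod]
  exact pair_integral hp0 hp1 d (inc u) (inc v)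

lemma integral_phi (hp0 : 0 ≤ p) (hp1 : p ≤ 1) (v : Vertex d) :
    ∫ ω, phi ω v ∂(percMeasure d p) = (1 - p / 2) ^ d := by
  have h := pair_integral hp0 hp1 d (inc v) ∅
  simp only [Finset.prod_empty, mul_one, Finset.inter_empty, Finset.sdiff_empty,
    Finset.empty_sdiff, Finset.card_empty, pow_zero, one_mul, add_zero] at h
  simp only [← phi_prod] at h
  rw [h, card_inc]

lemma integral_phi_sq (hp0 : 0 ≤ p) (hp1 : p ≤ 1) (v : Vertex d) :
    ∫ ω, phi ω v * phi ω v ∂(percMeasure d p) = (1 - 3 * p / 4) ^ d := by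
  rw [integral_phi_mul hp0 hp1, Finset.inter_self, Finset.sdiff_self, card_inc,
    Finset.card_empty, pow_zero, mul_one]

lemma integral_phi_mul_nonadj (hp0 : 0 ≤ p) (hp1 : p ≤ 1) {u v : Vertex d}
    (hne : u ≠ v) (h : ¬ adj u v) :
    ∫ ω, phi ω u * phi ω v ∂(percMeasure d p) = (1 - p / 2) ^ (d + d) := by
  rw [integral_phi_mul hp0 hp1, inc_inter_nonadj hne h, Finset.card_empty, pow_zero, one_mul,
    card_sdiff_inc, card_sdiff_inc, Finset.inter_comm (inc v) (inc u),
    inc_inter_nonadj hne h]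
  simp

lemma integral_phi_mul_adj (hp0 : 0 ≤ p) (hp1 : p ≤ 1) {u v : Vertex d} (h : adj u v) :
    ∫ ω, phi ω u * phi ω v ∂(percMeasure d p)
      = (1 - 3 * p / 4) * (1 - p / 2) ^ ((d - 1) + (d - 1)) := by
  rw [integral_phi_mul hp0 hp1, inc_inter_adj h, Finset.card_singleton, pow_one,
    card_sdiff_inc, card_sdiff_inc, Finset.inter_comm (inc v) (inc u),
    inc_inter_adj h, Finset.card_singleton]

lemma integral_PhiEven (hp0 : 0 ≤ p) (hp1 : p ≤ 1) (hd : 1 ≤ d) :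
    ∫ ω, PhiEven d ω ∂(percMeasure d p) = (1 / 2) * (2 - p) ^ d := by
  have h : ∫ ω, PhiEven d ω ∂(percMeasure d p)
      = ∑ v ∈ EvenV d, ∫ ω, phi ω v ∂(percMeasure d p) :=
    integral_finset_sum _ (fun i _ => Integrable.of_finite)
  rw [h, Finset.sum_congr rfl (fun v _ => integral_phi hp0 hp1 v), Finset.sum_const,
    card_evenV hd, nsmul_eq_mul]
  obtain ⟨k, rfl⟩ := Nat.exists_eq_add_of_le hd
  rw [show 1 + k - 1 = k from by omega]
  push_cast
  rw [show (2:ℝ) - p = 2 * (1 - p/2) from by ring, mul_pow]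
  ring

lemma integral_PhiOdd (hp0 : 0 ≤ p) (hp1 : p ≤ 1) (hd : 1 ≤ d) :
    ∫ ω, PhiOdd d ω ∂(percMeasure d p) = (1 / 2) * (2 - p) ^ d := by
  have h : ∫ ω, PhiOdd d ω ∂(percMeasure d p)
      = ∑ v ∈ OddV d, ∫ ω, phi ω v ∂(percMeasure d p) :=
    integral_finset_sum _ (fun i _ => Integrable.of_finite)
  rw [h, Finset.sum_congr rfl (fun v _ => integral_phi hp0 hp1 v), Finset.sum_const,
    card_oddV hd, nsmul_eq_mul]
  obtain ⟨k, rfl⟩ := Nat.exists_eq_add_of_le hd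
  rw [show 1 + k - 1 = k from by omega]
  push_cast
  rw [show (2:ℝ) - p = 2 * (1 - p/2) from by ring, mul_pow]
  ring

lemma odd_odd_not_adj {u v : Vertex d} (hu : u ∈ OddV d) (hv : v ∈ OddV d) :
    ¬ adj u v := fun h => (mem_OddV.mp hu) ((adj_parity h).mpr (mem_OddV.mp hv))

lemma integral_sq_side (hp0 : 0 ≤ p) (hp1 : p ≤ 1) (S : Finset (Vertex d))
    (hS : ∀ u ∈ S, ∀ v ∈ S, u ≠ v → ¬ adj u v) :
    ∫ ω, (∑ v ∈ S, phi ω v) * (∑ v ∈ S, phi ω v) ∂(percMeasure d p)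
      = (S.card : ℝ) * (1 - 3 * p / 4) ^ d
        + (S.card : ℝ) * ((S.card : ℝ) - 1) * (1 - p / 2) ^ (d + d) := by
  have expand : ∀ ω : Config d, (∑ v ∈ S, phi ω v) * (∑ v ∈ S, phi ω v)
      = ∑ u ∈ S, ∑ v ∈ S, phi ω u * phi ω v := by
    intro ω; rw [Finset.sum_mul_sum]
  simp only [expand]
  rw [integral_finset_sum _ (fun i _ => Integrable.of_finite)]
  have inner : ∀ u ∈ S, ∫ ω, ∑ v ∈ S, phi ω u * phi ω v ∂(percMeasure d p)
      = (1 - 3 * p / 4) ^ d + ((S.card : ℝ) - 1) * (1 - p / 2) ^ (d + d) := by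
    intro u hu
    rw [integral_finset_sum _ (fun i _ => Integrable.of_finite)]
    rw [← Finset.add_sum_erase _ _ hu, integral_phi_sq hp0 hp1]
    congr 1
    rw [Finset.sum_congr rfl (fun v hv => by
      have hv' := Finset.mem_erase.mp hv
      exact integral_phi_mul_nonadj hp0 hp1 (Ne.symm hv'.1) (hS u hu v hv'.2 (Ne.symm hv'.1))),
      Finset.sum_const, Finset.card_erase_of_mem hu, nsmul_eq_mul]
    have : ((S.card - 1 : ℕ) : ℝ) = (S.card : ℝ) - 1 := by
      have : 1 ≤ S.card := Finset.card_pos.mpr ⟨u, hu⟩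
      push_cast [this]; ring
    rw [this]
  rw [Finset.sum_congr rfl inner, Finset.sum_const, nsmul_eq_mul]
  ring

lemma variance_side (hp0 : 0 ≤ p) (hp1 : p ≤ 1) (hd : 1 ≤ d) (S : Finset (Vertex d))
    (hS : ∀ u ∈ S, ∀ v ∈ S, u ≠ v → ¬ adj u v) (hcard : S.card = 2 ^ (d - 1)) :
    variance (fun ω => ∑ v ∈ S, phi ω v) (percMeasure d p)
      = 2 ^ (d - 1) * ((1 - 3 * p / 4) ^ d - (1 - p / 2) ^ (2 * d)) := by
  rw [variance_eq_sub (MemLp.of_discrete)]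
  have h1 : ((fun ω => ∑ v ∈ S, phi ω v) ^ 2) = fun ω => (∑ v ∈ S, phi ω v) * (∑ v ∈ S, phi ω v) := by
    funext ω; simp [pow_two]
  have h2 : ∫ ω, ((fun ω => ∑ v ∈ S, phi ω v) ^ 2) ω ∂(percMeasure d p)
      = ∫ ω, (∑ v ∈ S, phi ω v) * (∑ v ∈ S, phi ω v) ∂(percMeasure d p) := by rw [h1]
  have h3 : ∫ ω, (∑ v ∈ S, phi ω v) ∂(percMeasure d p) = (S.card : ℝ) * (1 - p / 2) ^ d := by
    rw [integral_finset_sum _ (fun i _ => Integrable.of_finite),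
      Finset.sum_congr rfl (fun v _ => integral_phi hp0 hp1 v), Finset.sum_const, nsmul_eq_mul]
  rw [h2, integral_sq_side hp0 hp1 S hS, h3, hcard]
  obtain ⟨k, rfl⟩ := Nat.exists_eq_add_of_le hd
  rw [show 1 + k - 1 = k from by omega]
  push_cast
  ring

lemma variance_PhiEven (hp0 : 0 ≤ p) (hp1 : p ≤ 1) (hd : 1 ≤ d) :
    variance (PhiEven d) (percMeasure d p)
      = 2 ^ (d - 1) * ((1 - 3 * p / 4) ^ d - (1 - p / 2) ^ (2 * d)) := by
  have : PhiEven d = fun ω => ∑ v ∈ EvenV d, phi ω v := rfl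
  rw [this, variance_side hp0 hp1 hd _ (fun u hu v hv _ => even_even_not_adj hu hv)
    (card_evenV hd)]

lemma variance_PhiOdd (hp0 : 0 ≤ p) (hp1 : p ≤ 1) (hd : 1 ≤ d) :
    variance (PhiOdd d) (percMeasure d p)
      = 2 ^ (d - 1) * ((1 - 3 * p / 4) ^ d - (1 - p / 2) ^ (2 * d)) := by
  have : PhiOdd d = fun ω => ∑ v ∈ OddV d, phi ω v := rfl
  rw [this, variance_side hp0 hp1 hd _ (fun u hu v hv _ => odd_odd_not_adj hu hv)
    (card_oddV hd)]

lemma integral_cross (hp0 : 0 ≤ p) (hp1 : p ≤ 1) (hd : 1 ≤ d) :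
    ∫ ω, PhiEven d ω * PhiOdd d ω ∂(percMeasure d p)
      = (2 ^ (d - 1) : ℝ) * ((d : ℝ) * ((1 - 3 * p / 4) * (1 - p / 2) ^ ((d - 1) + (d - 1)))
          + ((2 ^ (d - 1) : ℝ) - (d : ℝ)) * (1 - p / 2) ^ (d + d)) := by
  have expand : ∀ ω : Config d, PhiEven d ω * PhiOdd d ω
      = ∑ u ∈ EvenV d, ∑ v ∈ OddV d, phi ω u * phi ω v := by
    intro ω; rw [PhiEven, PhiOdd, Finset.sum_mul_sum]
  simp only [expand]
  rw [integral_finset_sum _ (fun i _ => Integrable.of_finite)]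
  have inner : ∀ u ∈ EvenV d, ∫ ω, ∑ v ∈ OddV d, phi ω u * phi ω v ∂(percMeasure d p)
      = (d : ℝ) * ((1 - 3 * p / 4) * (1 - p / 2) ^ ((d - 1) + (d - 1)))
          + ((2 ^ (d - 1) : ℝ) - (d : ℝ)) * (1 - p / 2) ^ (d + d) := by
    intro u hu
    rw [integral_finset_sum _ (fun i _ => Integrable.of_finite)]
    rw [← Finset.sum_filter_add_sum_filter_not (OddV d) (fun v => adj u v)]
    have hA : ∑ v ∈ (OddV d).filter (fun v => adj u v),
        ∫ ω, phi ω u * phi ω v ∂(percMeasure d p)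
        = (d : ℝ) * ((1 - 3 * p / 4) * (1 - p / 2) ^ ((d - 1) + (d - 1))) := by
      rw [Finset.sum_congr rfl (fun v hv =>
        integral_phi_mul_adj hp0 hp1 (Finset.mem_filter.mp hv).2),
        Finset.sum_const, card_odd_neighbors u hu, nsmul_eq_mul]
    have hcard : ((OddV d).filter (fun v => ¬ adj u v)).card
        + d = 2 ^ (d - 1) := by
      have := Finset.card_filter_add_card_filter_not
        (s := OddV d) (p := fun v => adj u v)
      rw [card_odd_neighbors u hu, card_oddV hd] at this
      omega
    have hB : ∑ v ∈ (OddV d).filter (fun v => ¬ adj u v),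
        ∫ ω, phi ω u * phi ω v ∂(percMeasure d p)
        = ((2 ^ (d - 1) : ℝ) - (d : ℝ)) * (1 - p / 2) ^ (d + d) := by
      rw [Finset.sum_congr rfl (fun v hv => by
        have hv' := Finset.mem_filter.mp hv
        exact integral_phi_mul_nonadj hp0 hp1
          (even_odd_ne hu hv'.1) hv'.2),
        Finset.sum_const, nsmul_eq_mul]
      congr 1
      have : (((OddV d).filter (fun v => ¬ adj u v)).card : ℝ) + (d : ℝ) = (2 ^ (d-1) : ℕ) := by
        exact_mod_cast congrArg (Nat.cast : ℕ → ℝ) hcard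
      push_cast at this ⊢
      linarith
    rw [hA, hB]
  rw [Finset.sum_congr rfl inner, Finset.sum_const, card_evenV hd, nsmul_eq_mul]
  push_cast
  ring

lemma cov_PhiEven_PhiOdd (hp0 : 0 ≤ p) (hp1 : p ≤ 1) (hd : 1 ≤ d) :
    ∫ ω, (PhiEven d ω - (1 / 2) * (2 - p) ^ d) * (PhiOdd d ω - (1 / 2) * (2 - p) ^ d)
        ∂(percMeasure d p)
      = (d : ℝ) * ((2 - p) ^ 2 / 2) ^ (d - 1) * (p * (1 - p) / 4) := by
  set m : ℝ := (1 / 2) * (2 - p) ^ d with hm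
  have expand : ∀ ω : Config d, (PhiEven d ω - m) * (PhiOdd d ω - m)
      = PhiEven d ω * PhiOdd d ω - m * PhiOdd d ω - m * PhiEven d ω + m * m := by
    intro ω; ring
  simp only [expand]
  rw [integral_add (by exact (Integrable.of_finite).sub (Integrable.of_finite))
      (integrable_const _),
    integral_sub (by exact (Integrable.of_finite).sub (Integrable.of_finite))
      (Integrable.of_finite),
    integral_sub (Integrable.of_finite) (Integrable.of_finite),
    integral_const, integral_const_mul, integral_const_mul,
    integral_PhiEven hp0 hp1 hd, integral_PhiOdd hp0 hp1 hd, integral_cross hp0 hp1 hd]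
  simp only [measure_univ, ENNReal.toReal_one, probReal_univ, smul_eq_mul, one_mul]
  obtain ⟨k, rfl⟩ := Nat.exists_eq_add_of_le hd
  rw [show 1 + k - 1 = k from by omega, hm]
  rw [show (2:ℝ) - p = 2 * (1 - p/2) from by ring, mul_pow,
    show (2 * (1 - p/2) : ℝ) ^ 2 / 2 = 2 * (1 - p/2)^2 from by ring, mul_pow, ← pow_mul]
  push_cast
  ring

lemma tendsto_var_ratio (hp0 : 0 < p) (hp1 : p < 1) :
    Tendsto (fun d : ℕ => variance (PhiEven d) (percMeasure d p)
        / ((1 / 2) * ((4 - 3 * p) / 2) ^ d)) atTop (nhds 1) := by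
  have ha : (0:ℝ) < 1 - 3 * p / 4 := by nlinarith
  set r : ℝ := (1 - p/2)^2 / (1 - 3*p/4) with hrdef
  have hr0 : 0 ≤ r := by positivity
  have hr1 : r < 1 := by rw [hrdef, div_lt_one ha]; nlinarith
  have hlim : Tendsto (fun d : ℕ => 1 - r ^ d) atTop (nhds 1) := by
    have h0 := tendsto_pow_atTop_nhds_zero_of_lt_one hr0 hr1
    simpa using (tendsto_const_nhds.sub h0)
  apply hlim.congr'
  filter_upwards [eventually_ge_atTop 1] with d hd
  rw [variance_PhiEven hp0.le hp1.le hd]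
  obtain ⟨k, rfl⟩ := Nat.exists_eq_add_of_le hd
  rw [show 1 + k - 1 = k from by omega]
  have hne : ((1:ℝ)/2) * ((4 - 3*p)/2) ^ (1 + k) ≠ 0 := by
    have : (0:ℝ) < (4 - 3*p)/2 := by nlinarith
    positivity
  rw [eq_div_iff hne, hrdef, div_pow,
    show ((4 - 3*p)/2 : ℝ) = 2 * (1 - 3*p/4) from by ring, mul_pow, pow_mul]
  generalize hA : ((1 - p/2 : ℝ)^2)^(1+k) = A
  generalize hB : ((1 - 3*p/4 : ℝ))^(1+k) = B
  have h2 : B ≠ 0 := hB ▸ pow_ne_zero _ (ne_of_gt ha)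
  field_simp
  ring

lemma key_exp_bound {r c : ℝ} (hr0 : 0 < r) (hc : 0 < c)
    (hlogr : Real.log r = -(2 * c)) (k : ℕ) :
    ((1 + k : ℕ) : ℝ) * r ^ k ≤ 1 / (r * c) * Real.exp (-(c * ((1 + k : ℕ) : ℝ))) := by
  set n : ℝ := ((1 + k : ℕ) : ℝ) with hn
  have hn1 : (1:ℝ) ≤ n := by rw [hn]; exact_mod_cast Nat.le_add_right 1 k
  have hn0 : 0 < n := lt_of_lt_of_le one_pos hn1
  have hrk : r ^ (1 + k) = Real.exp (-(c * n)) * Real.exp (-(c * n)) := by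
    rw [← Real.exp_log hr0, ← Real.exp_nat_mul, ← Real.exp_add, hlogr, ← hn]
    ring_nf
  have hpow : r ^ (1 + k) = r * r ^ k := by rw [pow_add, pow_one]
  have hsplit : r ^ k = Real.exp (-(c * n)) * Real.exp (-(c * n)) / r := by
    rw [← hrk, hpow, mul_comm, mul_div_assoc, div_self (ne_of_gt hr0), mul_one]
  have hkey : n * Real.exp (-(c * n)) ≤ 1 / c := by
    rw [Real.exp_neg, ← div_eq_mul_inv, div_le_div_iff₀ (Real.exp_pos _) hc]
    have h := Real.add_one_le_exp (c * n)
    nlinarith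
  calc n * r ^ k = (n * Real.exp (-(c * n))) * Real.exp (-(c * n)) / r := by
        rw [hsplit]; ring
    _ ≤ (1 / c) * Real.exp (-(c * n)) / r := by gcongr
    _ = 1 / (r * c) * Real.exp (-(c * n)) := by
        field_simp

lemma cov_var_decay (hp0 : 0 < p) (hp1 : p < 1) :
    ∃ C > (0 : ℝ), ∃ c > (0 : ℝ), ∀ d : ℕ, 1 ≤ d →
      |(∫ ω, (PhiEven d ω - (1 / 2) * (2 - p) ^ d) * (PhiOdd d ω - (1 / 2) * (2 - p) ^ d)
            ∂(percMeasure d p))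
          / variance (PhiEven d) (percMeasure d p)|
        ≤ C * Real.exp (-c * d) := by
  have ha : (0:ℝ) < 1 - 3 * p / 4 := by nlinarith
  have hq : (0:ℝ) < 1 - p / 2 := by nlinarith
  obtain ⟨r, hrdef⟩ : ∃ r : ℝ, r = (1 - p/2)^2 / (1 - 3*p/4) := ⟨_, rfl⟩
  have hr0 : 0 < r := by rw [hrdef]; positivity
  have hr1 : r < 1 := by rw [hrdef, div_lt_one ha]; nlinarith
  obtain ⟨c, hcdef⟩ : ∃ c : ℝ, c = -Real.log r / 2 := ⟨_, rfl⟩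
  have hlog : Real.log r < 0 := Real.log_neg hr0 hr1
  have hc : 0 < c := by rw [hcdef]; linarith
  have hlogr : Real.log r = -(2 * c) := by rw [hcdef]; ring
  have hβ : (0:ℝ) < p * (1 - p) / 4 := by nlinarith
  have h1r : (0:ℝ) < 1 - r := by linarith
  refine ⟨(p * (1 - p) / 4) / ((1 - 3*p/4) * (1 - r)) * (1 / (r * c)),
    mul_pos (div_pos hβ (mul_pos ha h1r)) (div_pos one_pos (mul_pos hr0 hc)),
    c, hc, ?_⟩
  intro d hd
  rw [cov_PhiEven_PhiOdd hp0.le hp1.le hd, variance_PhiEven hp0.le hp1.le hd]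
  obtain ⟨k, rfl⟩ := Nat.exists_eq_add_of_le hd
  rw [show 1 + k - 1 = k from by omega]
  have hq2 : ((1 - p/2 : ℝ))^2 = r * (1 - 3*p/4) := by
    rw [hrdef, div_mul_cancel₀ _ (ne_of_gt ha)]
  have hvpow : ((1 - p/2 : ℝ)) ^ (2 * (1 + k)) = r^(1+k) * (1 - 3*p/4)^(1+k) := by
    rw [pow_mul, hq2, mul_pow]
  have hcpow : (((2 - p : ℝ))^2 / 2) ^ k = 2^k * (r^k * (1 - 3*p/4)^k) := by
    rw [show ((2 - p : ℝ))^2 / 2 = 2 * (1 - p/2)^2 from by ring, hq2, mul_pow, mul_pow]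
  have hD : 0 < 1 - r^(1+k) := by
    have := pow_lt_one₀ hr0.le hr1 (show 1 + k ≠ 0 by omega)
    linarith
  have hDr : 1 - r ≤ 1 - r^(1+k) := by
    have h := pow_le_pow_of_le_one hr0.le hr1.le (Nat.le_add_left 1 k)
    rw [pow_one, add_comm k 1] at h
    linarith
  have hnum : (0:ℝ) ≤ ((1 + k : ℕ) : ℝ) * r^k * (p * (1 - p) / 4) :=
    mul_nonneg (mul_nonneg (Nat.cast_nonneg _) (pow_nonneg hr0.le k)) hβ.le
  have heq : ((1 + k : ℕ) : ℝ) * ((2 - p)^2 / 2) ^ k * (p * (1 - p) / 4)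
      / (2 ^ k * ((1 - 3*p/4) ^ (1 + k) - (1 - p/2) ^ (2 * (1 + k))))
      = ((1 + k : ℕ) : ℝ) * r^k * (p * (1 - p) / 4)
        / ((1 - 3*p/4) * (1 - r^(1+k))) := by
    rw [hcpow, hvpow,
      show ((1 - 3*p/4 : ℝ))^(1+k) = (1 - 3*p/4) * (1 - 3*p/4)^k from by
        rw [pow_add, pow_one]]
    have hden1 : (2:ℝ)^k * ((1 - 3*p/4) * (1 - 3*p/4)^k
        - r^(1+k) * ((1 - 3*p/4) * (1 - 3*p/4)^k)) ≠ 0 := by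
      rw [show ((1 - 3*p/4 : ℝ)) * (1 - 3*p/4)^k - r^(1+k) * ((1 - 3*p/4) * (1 - 3*p/4)^k)
          = ((1 - 3*p/4) * (1 - 3*p/4)^k) * (1 - r^(1+k)) from by ring]
      exact ne_of_gt (by positivity)
    have hden2 : ((1 - 3*p/4 : ℝ)) * (1 - r^(1+k)) ≠ 0 := ne_of_gt (mul_pos ha hD)
    rw [div_eq_div_iff hden1 hden2]
    ring
  rw [heq, abs_of_nonneg (div_nonneg hnum (mul_pos ha hD).le)]
  calc ((1 + k : ℕ) : ℝ) * r^k * (p * (1 - p) / 4) / ((1 - 3*p/4) * (1 - r^(1+k)))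
      ≤ ((1 + k : ℕ) : ℝ) * r^k * (p * (1 - p) / 4) / ((1 - 3*p/4) * (1 - r)) := by
        apply div_le_div_of_nonneg_left hnum (mul_pos ha h1r)
        exact mul_le_mul_of_nonneg_left hDr ha.le
    _ = (p * (1 - p) / 4) / ((1 - 3*p/4) * (1 - r)) * (((1 + k : ℕ) : ℝ) * r^k) := by
        ring
    _ ≤ (p * (1 - p) / 4) / ((1 - 3*p/4) * (1 - r))
          * (1 / (r * c) * Real.exp (-(c * ((1 + k : ℕ) : ℝ)))) := by
        exact mul_le_mul_of_nonneg_left (key_exp_bound hr0 hc hlogr k)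
          (div_pos hβ (mul_pos ha h1r)).le
    _ = (p * (1 - p) / 4) / ((1 - 3*p/4) * (1 - r)) * (1 / (r * c))
          * Real.exp (-c * ((1 + k : ℕ) : ℝ)) := by
        rw [show -(c * ((1 + k : ℕ) : ℝ)) = -c * ((1 + k : ℕ) : ℝ) from by ring]
        ring


theorem Phi_moments (p : ℝ) (hp0 : 0 ≤ p) (hp1 : p ≤ 1) :
    (∀ d : ℕ, 1 ≤ d →
      (∫ ω, PhiEven d ω ∂(percMeasure d p)) = (1 / 2) * (2 - p) ^ d ∧
      (∫ ω, PhiOdd d ω ∂(percMeasure d p)) = (1 / 2) * (2 - p) ^ d) ∧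
    (∀ d : ℕ, 1 ≤ d →
      variance (PhiEven d) (percMeasure d p)
          = 2 ^ (d - 1) * ((1 - 3 * p / 4) ^ d - (1 - p / 2) ^ (2 * d)) ∧
      variance (PhiOdd d) (percMeasure d p)
          = 2 ^ (d - 1) * ((1 - 3 * p / 4) ^ d - (1 - p / 2) ^ (2 * d))) ∧
    (0 < p → p < 1 →
      Tendsto (fun d : ℕ => variance (PhiEven d) (percMeasure d p)
          / ((1 / 2) * ((4 - 3 * p) / 2) ^ d)) atTop (nhds 1)) ∧
    (∀ d : ℕ, 1 ≤ d →
      (∫ ω, (PhiEven d ω - (1 / 2) * (2 - p) ^ d) * (PhiOdd d ω - (1 / 2) * (2 - p) ^ d)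
          ∂(percMeasure d p))
        = (d : ℝ) * ((2 - p) ^ 2 / 2) ^ (d - 1) * (p * (1 - p) / 4)) ∧
    (0 < p → p < 1 → ∃ C > (0 : ℝ), ∃ c > (0 : ℝ), ∀ d : ℕ, 1 ≤ d →
      |(∫ ω, (PhiEven d ω - (1 / 2) * (2 - p) ^ d) * (PhiOdd d ω - (1 / 2) * (2 - p) ^ d)
            ∂(percMeasure d p))
          / variance (PhiEven d) (percMeasure d p)|
        ≤ C * Real.exp (-c * d)) := by
  exact ⟨fun d hd => ⟨integral_PhiEven hp0 hp1 hd, integral_PhiOdd hp0 hp1 hd⟩,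
    fun d hd => ⟨variance_PhiEven hp0 hp1 hd, variance_PhiOdd hp0 hp1 hd⟩,
    fun h0 h1 => tendsto_var_ratio h0 h1,
    fun d hd => cov_PhiEven_PhiOdd hp0 hp1 hd,
    fun h0 h1 => cov_var_decay h0 h1⟩

end PercolatedHypercube
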